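/- Any positive (one-sided) itinerary A ∈ Σ₊(T, P) can be decomposed in at most one way as an infinite concatenation of admissible strips: if n₀ = 0 < n₁ < n₂ < ⋯ and m₀ = 0 < m₁ < m₂ < ⋯ are such that each A_{n_i}…A_{n_{i+1}} and each A_{m_i}…A_{m_{i+1}} corresponds to an admissible strip, then n_i = m_i for all i. -/
import Mathlib


variable {P : Type*}

/-- The finite word `x_a x_{a+1} … x_{b-1}` read off a one-sided itinerary `x`. -/
def seg (x : ℕ → P) (a b : ℕ) : List P :=
  List.ofFn (fun j : Fin (b - a) => x (a + (j : ℕ)))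

lemma seg_shift (x : ℕ → P) (c a b : ℕ) :
    seg (fun k => x (c + k)) a b = seg x (c + a) (c + b) := by
  unfold seg
  have h : c + b - (c + a) = b - a := by omega
  apply List.ext_getElem
  · simp [h]
  · intro i h1 h2
    simp only [List.getElem_ofFn]
    ring_nf

lemma no_cross (Adm : List P → Prop)
    (hno : ∀ (x : ℕ → P) (n₁ m₁ n₂ : ℕ), 0 < n₁ → n₁ < m₁ → n₁ < n₂ →
      Adm (seg x 0 m₁) → Adm (seg x 0 n₁) → ¬ Adm (seg x n₁ n₂))
    (x : ℕ → P) (n m : ℕ → ℕ) (hnmono : StrictMono n) (hmmono : StrictMono m)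
    (hnadm : ∀ i, Adm (seg x (n i) (n (i + 1)))) (hmadm : ∀ i, Adm (seg x (m i) (m (i + 1))))
    (i : ℕ) (heq : n i = m i) : ¬ n (i + 1) < m (i + 1) := by
  intro hlt
  set c := n i with hc
  have hci1 : c < n (i + 1) := hnmono (Nat.lt_succ_self i)
  have hci2 : n (i + 1) < n (i + 2) := hnmono (Nat.lt_succ_self (i + 1))
  have key := hno (fun k => x (c + k)) (n (i + 1) - c) (m (i + 1) - c) (n (i + 2) - c)
    (by omega) (by omega) (by omega)
  apply key
  · rw [seg_shift]
    have : c + (m (i + 1) - c) = m (i + 1) := by omega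
    rw [this, Nat.add_zero, heq]
    exact hmadm i
  · rw [seg_shift]
    have : c + (n (i + 1) - c) = n (i + 1) := by omega
    rw [this, Nat.add_zero]
    exact hnadm i
  · rw [seg_shift]
    have h1 : c + (n (i + 1) - c) = n (i + 1) := by omega
    have h2 : c + (n (i + 2) - c) = n (i + 2) := by omega
    rw [h1, h2]
    exact hnadm (i + 1)

/-- Uniqueness of decompositions into admissible words: if the family `Adm` of admissible
words has the non-overlap property (a strict admissible prefix of an admissible word is
never immediately followed by an admissible word), then any itinerary admits at most one
decomposition as an infinite concatenation of admissible words. -/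
theorem admissible_decomposition_unique
    (Adm : List P → Prop)
    (hno : ∀ (x : ℕ → P) (n₁ m₁ n₂ : ℕ), 0 < n₁ → n₁ < m₁ → n₁ < n₂ →
      Adm (seg x 0 m₁) → Adm (seg x 0 n₁) → ¬ Adm (seg x n₁ n₂))
    (x : ℕ → P) (n m : ℕ → ℕ)
    (hn0 : n 0 = 0) (hm0 : m 0 = 0) (hnmono : StrictMono n) (hmmono : StrictMono m)
    (hnadm : ∀ i, Adm (seg x (n i) (n (i + 1)))) (hmadm : ∀ i, Adm (seg x (m i) (m (i + 1)))) :
    ∀ i, n i = m i := by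
  intro i
  induction i with
  | zero => rw [hn0, hm0]
  | succ i ih =>
    have h1 := no_cross Adm hno x n m hnmono hmmono hnadm hmadm i ih
    have h2 := no_cross Adm hno x m n hmmono hnmono hmadm hnadm i ih.symm
    omega
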